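/- The Hamiltonian H_p = Σ_α (S_α² + (j_β + j_γ)T_α²) is a first integral of the vector field X_s, i.e. the derivative of H_p along X_s vanishes identically. -/

import Mathlib

/-- The Clebsch vector field `X_s` on ℝ⁶ = (Fin 3 → ℝ) × (Fin 3 → ℝ). -/
noncomputable def Xs (j : Fin 3 → ℝ) (p : (Fin 3 → ℝ) × (Fin 3 → ℝ)) :
    (Fin 3 → ℝ) × (Fin 3 → ℝ) :=
  (fun α => j α * (j (α + 2) - j (α + 1)) * p.2 (α + 1) * p.2 (α + 2)
      + (j (α + 1) - j (α + 2)) * p.1 (α + 1) * p.1 (α + 2),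
   fun α => j (α + 1) * p.1 (α + 1) * p.2 (α + 2)
      - j (α + 2) * p.1 (α + 2) * p.2 (α + 1))

/-- `H_p = Σ_α S_α² + (j_β + j_γ) T_α²`. -/
noncomputable def Hp (j : Fin 3 → ℝ) (p : (Fin 3 → ℝ) × (Fin 3 → ℝ)) : ℝ :=
  ∑ α : Fin 3, (p.1 α ^ 2 + (j (α + 1) + j (α + 2)) * p.2 α ^ 2)

theorem Hp_first_integral_of_Xs (j : Fin 3 → ℝ)
    (p : (Fin 3 → ℝ) × (Fin 3 → ℝ)) :
    fderiv ℝ (Hp j) p (Xs j p) = 0 := by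
  have h : HasFDerivAt (Hp j)
      (∑ α : Fin 3, ((2 * p.1 α) • ((ContinuousLinearMap.proj α).comp
          (ContinuousLinearMap.fst ℝ (Fin 3 → ℝ) (Fin 3 → ℝ)))
        + ((j (α+1) + j (α+2)) * (2 * p.2 α)) • ((ContinuousLinearMap.proj α).comp
          (ContinuousLinearMap.snd ℝ (Fin 3 → ℝ) (Fin 3 → ℝ))))) p := by
    unfold Hp
    apply HasFDerivAt.fun_sum
    intro α _
    have h1 : HasFDerivAt (fun q : (Fin 3 → ℝ) × (Fin 3 → ℝ) => q.1 α)
        ((ContinuousLinearMap.proj α).comp (ContinuousLinearMap.fst ℝ (Fin 3 → ℝ) (Fin 3 → ℝ)))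
        p := ((ContinuousLinearMap.proj α).comp
          (ContinuousLinearMap.fst ℝ (Fin 3 → ℝ) (Fin 3 → ℝ))).hasFDerivAt
    have h2 : HasFDerivAt (fun q : (Fin 3 → ℝ) × (Fin 3 → ℝ) => q.2 α)
        ((ContinuousLinearMap.proj α).comp (ContinuousLinearMap.snd ℝ (Fin 3 → ℝ) (Fin 3 → ℝ)))
        p := ((ContinuousLinearMap.proj α).comp
          (ContinuousLinearMap.snd ℝ (Fin 3 → ℝ) (Fin 3 → ℝ))).hasFDerivAt
    have := ((h1.mul h1).congr_fderiv rfl).add (((h2.mul h2)).const_mul (j (α+1) + j (α+2)))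
    have heq : (fun q : (Fin 3 → ℝ) × (Fin 3 → ℝ) =>
        q.1 α ^ 2 + (j (α+1) + j (α+2)) * q.2 α ^ 2) =
        fun q => q.1 α * q.1 α + (j (α+1) + j (α+2)) * (q.2 α * q.2 α) := by
      funext q; ring
    rw [heq]
    convert this using 1
    ext v <;> simp <;> ring
    ext v <;> simp <;> ring
  rw [h.fderiv]
  simp only [ContinuousLinearMap.sum_apply, ContinuousLinearMap.add_apply,
    ContinuousLinearMap.smul_apply, ContinuousLinearMap.comp_apply,
    ContinuousLinearMap.coe_fst', ContinuousLinearMap.coe_snd',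
    ContinuousLinearMap.proj_apply, Xs, Fin.sum_univ_three, smul_eq_mul]
  simp only [show ((0:Fin 3)+1) = 1 from rfl, show ((0:Fin 3)+2) = 2 from rfl,
    show ((1:Fin 3)+1) = 2 from rfl, show ((1:Fin 3)+2) = 0 from rfl,
    show ((2:Fin 3)+1) = 0 from rfl, show ((2:Fin 3)+2) = 1 from rfl]
  ring
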